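/- Let K_3 : D → Type be the copresheaf on the two-object category D (objects E, V with morphisms s, t : E → V) encoding the 3-clique: K_3(V) = {0,1,2}, K_3(E) = all ordered pairs of distinct elements, with s, t the projections. Then there is no natural transformation Ran_{K_3} K_3 → id; equivalently, there is no n and no natural transformation (graph homomorphism) h : K_3^n → K_3 arising from a projection-free symmetric combination—concretely, there is no graph homomorphism σ : K_3^6 → K_3 satisfying σ(x,y,z,x,y,z) = σ(y,z,x,z,x,y) for all x,y,z ∈ {0,1,2}. -/

import Mathlib

open CategoryTheory CategoryTheory.Limits Opposite

/-- The copresheaf on the two-object category `E ⇉ V` (realized as `WalkingParallelPair`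
with `E = zero`, `V = one`) encoding the directed 3-clique: vertices `Fin 3`, edges all
ordered pairs of distinct vertices, with `s, t` the two projections. -/
def K3 : WalkingParallelPair ⥤ Type :=
  parallelPair (TypeCat.ofHom (fun e : {p : Fin 3 × Fin 3 // p.1 ≠ p.2} => e.1.1))
    (TypeCat.ofHom (fun e : {p : Fin 3 × Fin 3 // p.1 ≠ p.2} => e.1.2))

noncomputable section
namespace Stmt18Aux

open Filter

lemma exists_ulim (v : ℕ → Fin 3) :
    ∃ a, ∀ᶠ n in (hyperfilter ℕ : Filter ℕ), v n = a := by
  by_contra h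
  push_neg at h
  have h' : ∀ a : Fin 3, ∀ᶠ n in (hyperfilter ℕ : Filter ℕ), v n ≠ a := fun a =>
    h a
  obtain ⟨n, h0, h1, h2⟩ :=
    (((h' 0).and ((h' 1).and (h' 2))).exists : ∃ n, v n ≠ 0 ∧ v n ≠ 1 ∧ v n ≠ 2)
  omega

/-- The limit of a `Fin 3`-valued sequence along the hyperfilter. -/
def ulim (v : ℕ → Fin 3) : Fin 3 := (exists_ulim v).choose

lemma ulim_spec (v : ℕ → Fin 3) : ∀ᶠ n in (hyperfilter ℕ : Filter ℕ), v n = ulim v :=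
  (exists_ulim v).choose_spec

lemma ulim_congr {v w : ℕ → Fin 3} (h : ∀ᶠ n in (hyperfilter ℕ : Filter ℕ), v n = w n) :
    ulim v = ulim w := by
  obtain ⟨n, h1, h2, h3⟩ := ((ulim_spec v).and ((ulim_spec w).and h)).exists
  rw [← h1, ← h2, h3]

lemma ulim_ne {v w : ℕ → Fin 3} (h : ∀ n, v n ≠ w n) : ulim v ≠ ulim w := by
  intro he
  obtain ⟨n, h1, h2⟩ := ((ulim_spec v).and (ulim_spec w)).exists
  exact h n (by rw [h1, h2, he])

lemma ulim_update (x y : ℕ) (u : ℕ → Fin 3) :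
    ulim (fun n => u (Function.update id x y n)) = ulim u := by
  apply ulim_congr
  have h : {x}ᶜ ∈ (hyperfilter ℕ : Filter ℕ) :=
    Filter.mem_hyperfilter_of_finite_compl (by simp)
  apply Filter.mem_of_superset h
  intro n hn
  simp only [Set.mem_compl_iff, Set.mem_singleton_iff] at hn
  simp [Function.update_of_ne hn]

/-- The ultrafilter-limit graph homomorphism `K3^ℕ ⟶ K3`. -/
def σU : (K3 ⋙ coyoneda.obj (op ℕ)) ⟶ K3 where
  app
  | WalkingParallelPair.zero => TypeCat.ofHom fun (e : ℕ ⟶ {p : Fin 3 × Fin 3 // p.1 ≠ p.2}) =>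
      (⟨(ulim fun n => (e n).1.1, ulim fun n => (e n).1.2),
        ulim_ne fun n => (e n).2⟩ : {p : Fin 3 × Fin 3 // p.1 ≠ p.2})
  | WalkingParallelPair.one => TypeCat.ofHom fun (v : ℕ ⟶ Fin 3) => ulim fun n => v n
  naturality := by
    rintro _ _ (_ | _ | _) <;> rfl

lemma whisker_inv (x : ℕ) :
    Functor.whiskerLeft K3 (coyoneda.map
        (Quiver.Hom.op (X := ℕ) (TypeCat.ofHom (Function.update (id : ℕ → ℕ) x (x + 1))))) ≫ σU = σU := by
  apply NatTrans.ext
  funext W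
  cases W with
  | zero =>
      ext (u : ℕ ⟶ {p : Fin 3 × Fin 3 // p.1 ≠ p.2})
      apply Subtype.ext
      apply Prod.ext
      · exact ulim_update x (x + 1) (fun n => (u n).1.1)
      · exact ulim_update x (x + 1) (fun n => (u n).1.2)
  | one => ext (u : ℕ ⟶ Fin 3); exact ulim_update x (x + 1) (fun n => u n)

end Stmt18Aux
end

/-- There is no natural transformation `Ran_{K₃} K₃ ⟶ id` (for `Ran` any right adjoint to
precomposition with `K₃`); concretely, there is no graph homomorphism (natural
transformation) `σ : K₃^6 ⟶ K₃` satisfying the Siggers identity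
`σ(x,y,z,x,y,z) = σ(y,z,x,z,x,y)` for all `x, y, z ∈ Fin 3`. -/
theorem stmt18 :
    (∀ (Ran : (WalkingParallelPair ⥤ Type) ⥤ (Type ⥤ Type)),
      ((Functor.whiskeringLeft WalkingParallelPair Type Type).obj K3 ⊣ Ran) →
        ¬ Nonempty (Ran.obj K3 ⟶ 𝟭 Type)) ∧
    ¬ ∃ σ : (K3 ⋙ coyoneda.obj (op (Fin 6))) ⟶ K3,
        ∀ x y z : Fin 3,
          σ.app WalkingParallelPair.one (TypeCat.ofHom ![x, y, z, x, y, z])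
            = σ.app WalkingParallelPair.one (TypeCat.ofHom ![y, z, x, z, x, y]) := by
  open Stmt18Aux in
  constructor
  · intro Ran adj hne
    obtain ⟨φ⟩ := hne
    let r : coyoneda.obj (op ℕ) ⟶ Ran.obj K3 :=
      (adj.homEquiv (coyoneda.obj (op ℕ)) K3) σU
    let ρ : (Ran.obj K3).obj ℕ := r.app ℕ (𝟙 ℕ)
    let x₀ : ℕ := φ.app ℕ ρ
    let f₀ : ℕ ⟶ ℕ := TypeCat.ofHom (Function.update (id : ℕ → ℕ) x₀ (x₀ + 1))
    let c : coyoneda.obj (op ℕ) ⟶ coyoneda.obj (op ℕ) :=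
      coyoneda.map (Quiver.Hom.op (X := ℕ) f₀)
    -- the ultrafilter hom is invariant under precomposition with f₀
    have h1 : ((Functor.whiskeringLeft WalkingParallelPair Type Type).obj K3).map c ≫ σU = σU :=
      whisker_inv x₀
    have hcr : r = c ≫ r := by
      have h2 := adj.homEquiv_naturality_left c σU
      rw [h1] at h2
      exact h2
    have e1 : ρ = r.app ℕ f₀ := by
      have := types_congr_hom (NatTrans.congr_app hcr ℕ) (𝟙 ℕ)
      exact this
    have e2 : r.app ℕ f₀ = (Ran.obj K3).map f₀ ρ := by
      have := types_congr_hom (r.naturality f₀) (𝟙 ℕ)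
      simpa using this
    have e3 : φ.app ℕ ((Ran.obj K3).map f₀ ρ) = f₀ (φ.app ℕ ρ) :=
      types_congr_hom (φ.naturality f₀) ρ
    have hfix : f₀ x₀ = x₀ := by
      have chain : φ.app ℕ ρ = f₀ (φ.app ℕ ρ) := by
        calc φ.app ℕ ρ = φ.app ℕ (r.app ℕ f₀) := by rw [← e1]
          _ = φ.app ℕ ((Ran.obj K3).map f₀ ρ) := by rw [e2]
          _ = f₀ (φ.app ℕ ρ) := e3
      exact chain.symm
    have hx : f₀ x₀ = x₀ + 1 := Function.update_self x₀ (x₀ + 1) id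
    have hcontra : (x₀ : ℕ) = x₀ + 1 := hfix.symm.trans hx
    exact Nat.succ_ne_self x₀ hcontra.symm
  · rintro ⟨σ, hs⟩
    let E6' : Fin 6 → {p : Fin 3 × Fin 3 // p.1 ≠ p.2} :=
      ![⟨(0, 1), by decide⟩, ⟨(1, 2), by decide⟩, ⟨(2, 0), by decide⟩,
        ⟨(0, 2), by decide⟩, ⟨(1, 0), by decide⟩, ⟨(2, 1), by decide⟩]
    let E6 : (K3 ⋙ coyoneda.obj (op (Fin 6))).obj WalkingParallelPair.zero := TypeCat.ofHom E6'
    have hl := types_congr_hom (σ.naturality WalkingParallelPairHom.left) E6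
    have hr := types_congr_hom (σ.naturality WalkingParallelPairHom.right) E6
    have hL : (K3 ⋙ coyoneda.obj (op (Fin 6))).map WalkingParallelPairHom.left E6
        = TypeCat.ofHom ![(0 : Fin 3), 1, 2, 0, 1, 2] := by
      show (_ : Fin 6 ⟶ Fin 3) = _; ext i; fin_cases i <;> rfl
    have hR : (K3 ⋙ coyoneda.obj (op (Fin 6))).map WalkingParallelPairHom.right E6
        = TypeCat.ofHom ![(1 : Fin 3), 2, 0, 2, 0, 1] := by
      show (_ : Fin 6 ⟶ Fin 3) = _; ext i; fin_cases i <;> rfl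
    simp only [types_comp_apply] at hl hr
    have key := hs 0 1 2
    exact (σ.app WalkingParallelPair.zero E6).2 (hl.symm.trans
      ((congrArg (fun v => σ.app WalkingParallelPair.one v) hL).trans
        (key.trans ((congrArg (fun v => σ.app WalkingParallelPair.one v) hR).symm.trans hr))))
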